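/- Let b0, b1, b2, b3, b4 be arbitrary real numbers and let A be the real 4×4 antisymmetric matrix A = [[0, b0, 2b1, b2], [−b0, 0, 3b2, 2b3], [−2b1, −3b2, 0, b4], [−b2, −2b3, −b4, 0]] (the antisymmetric part of the Ricci tensor of the gl(2,R) connection). Then det A = (3b2² − 4b1·b3 + b0·b4)². -/

import Mathlib

/-- The determinant of the antisymmetric part of the Ricci tensor of the
`gl(2,ℝ)`-valued connection equals the square of the invariant
`I₃ = 3b₂² - 4b₁b₃ + b₀b₄`. -/
theorem det_antisymmetric_ricci (b0 b1 b2 b3 b4 : ℝ) :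
    (!![0, b0, 2*b1, b2;
        -b0, 0, 3*b2, 2*b3;
        -2*b1, -3*b2, 0, b4;
        -b2, -2*b3, -b4, 0] : Matrix (Fin 4) (Fin 4) ℝ).det
      = (3*b2^2 - 4*b1*b3 + b0*b4)^2 := by
  simp [Matrix.det_succ_row_zero, Fin.sum_univ_succ, Fin.succAbove]
  ring
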